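/- Let k be a field complete with respect to a non-archimedean absolute value, let A be a k-affinoid algebra, let ρ = (ρ_1,…,ρ_m) be a polyradius, and let ψ : k{Θ/ρ} → A be a distinguished surjection such that the spectral seminorm of f_i := ψ(Θ_i) equals ρ_i for every i. If g_1,…,g_m ∈ A satisfy ‖f_i − g_i‖_sp < ρ_i for every i, then the bounded k-algebra morphism k{Θ/ρ} → A sending Θ_i to g_i for every i is again a distinguished surjection. -/

import Mathlib

/-!
STATEMENT 5: perturbation of a distinguished surjection from a weighted Tate algebra
onto a k-affinoid algebra: if `ψ : k{Θ/ρ} → A` is a distinguished surjection with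
`‖ψ(Θ_i)‖_sp = ρ_i` and `g_i ∈ A` satisfy `‖ψ(Θ_i) - g_i‖_sp < ρ_i`, then the bounded
`k`-algebra morphism sending `Θ_i` to `g_i` is again a distinguished surjection.
-/

noncomputable section

open Filter

universe u v

/-- The weight `r^I = ∏ r i ^ I i` of a multi-index `I`. -/
def mweight {n : ℕ} (r : Fin n → ℝ) (I : Fin n → ℕ) : ℝ := ∏ i, r i ^ I i

/-- `A` *is* the weighted Tate algebra `k{T_1/r_1,…,T_n/r_n}`. -/
structure IsTateAlgebra (k : Type*) [NormedField k] {n : ℕ} (r : Fin n → ℝ)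
    (A : Type*) [NormedCommRing A] [NormedAlgebra k A] where
  T : Fin n → A
  coeff : A →ₗ[k] ((Fin n → ℕ) → k)
  coeff_injective : Function.Injective coeff
  coeff_tendsto : ∀ a : A,
    Tendsto (fun I => ‖coeff a I‖ * mweight r I) cofinite (nhds 0)
  coeff_surjective : ∀ g : (Fin n → ℕ) → k,
    Tendsto (fun I => ‖g I‖ * mweight r I) cofinite (nhds 0) → ∃ a : A, coeff a = g
  norm_eq : ∀ a : A, ‖a‖ = ⨆ I, ‖coeff a I‖ * mweight r I
  coeff_one : coeff 1 = fun I => if I = 0 then (1 : k) else 0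
  coeff_T : ∀ i, coeff (T i) = fun I => if I = Pi.single i 1 then (1 : k) else 0
  coeff_mul : ∀ a b : A, ∀ I,
    coeff (a * b) I =
      ∑ p ∈ (Finset.Iic I ×ˢ Finset.Iic I).filter (fun p => p.1 + p.2 = I),
        coeff a p.1 * coeff b p.2

/-- A ring morphism between normed rings is bounded. -/
def IsBoundedHom {A : Type*} {B : Type*} [NormedRing A] [NormedRing B] (f : A →+* B) : Prop :=
  ∃ C : ℝ, ∀ a, ‖f a‖ ≤ C * ‖a‖

/-- An admissible surjection: surjective, bounded, and the quotient norm is equivalent to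
the norm of the target. -/
def IsAdmissibleSurj {A : Type*} {B : Type*} [NormedRing A] [NormedRing B]
    (f : A →+* B) : Prop :=
  IsBoundedHom f ∧ Function.Surjective f ∧
    ∃ C : ℝ, 0 < C ∧ ∀ b : B, ∃ a : A, f a = b ∧ ‖a‖ ≤ C * ‖b‖

/-- The spectral seminorm `‖a‖_sp = lim_n ‖a^n‖^{1/n} = inf_n ‖a^n‖^{1/n}` of an element
of a normed ring. -/
def spNorm {A : Type*} [NormedRing A] (a : A) : ℝ :=
  ⨅ n : ℕ, ‖a ^ (n + 1)‖ ^ (1 / (n + 1 : ℝ))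

/-- A presentation of `A` as an admissible quotient of a weighted Tate algebra over `k`. -/
structure TatePresentation (k : Type u) [NormedField k]
    (A : Type v) [NormedCommRing A] [NormedAlgebra k A] where
  n : ℕ
  r : Fin n → ℝ
  rpos : ∀ i, 0 < r i
  B : Type u
  [instB : NormedCommRing B]
  [instBA : NormedAlgebra k B]
  tate : IsTateAlgebra k r B
  hom : B →ₐ[k] A

attribute [instance] TatePresentation.instB TatePresentation.instBA

/-- A `k`-affinoid algebra: a Banach `k`-algebra admitting an admissible surjection from
a weighted Tate algebra. -/
def IsAffinoidAlgebra (k : Type u) [NormedField k]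
    (A : Type v) [NormedCommRing A] [NormedAlgebra k A] : Prop :=
  ∃ P : TatePresentation k A, IsAdmissibleSurj P.hom.toRingHom

/-- A morphism from a (Tate) normed algebra onto `A` is distinguished if it is bounded,
surjective, and every `a ∈ A` has a preimage `b` with `‖b‖ = ‖a‖_sp`. -/
def IsDistinguishedSurj {B : Type*} {A : Type*} [NormedRing B] [NormedCommRing A]
    (φ : B →+* A) : Prop :=
  IsBoundedHom φ ∧ Function.Surjective φ ∧ ∀ a : A, ∃ b : B, φ b = a ∧ ‖b‖ = spNorm a

/-- `A` is a distinguished `k`-affinoid algebra: some (admissible) surjection from a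
weighted Tate algebra is distinguished. -/
def IsDistinguishedAffinoid (k : Type u) [NormedField k]
    (A : Type v) [NormedCommRing A] [NormedAlgebra k A] : Prop :=
  ∃ P : TatePresentation k A, IsDistinguishedSurj P.hom.toRingHom



/-! ### Auxiliary lemmas -/

namespace TateAux

open Finset IsUltrametricDist

variable {m : ℕ}

lemma mweight_pos {ρ : Fin m → ℝ} (hρ : ∀ i, 0 < ρ i) (I : Fin m → ℕ) :
    0 < mweight ρ I :=
  Finset.prod_pos fun i _ => pow_pos (hρ i) _

lemma mweight_add (ρ : Fin m → ℝ) (I J : Fin m → ℕ) :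
    mweight ρ (I + J) = mweight ρ I * mweight ρ J := by
  simp only [mweight, Pi.add_apply, pow_add, Finset.prod_mul_distrib]

lemma prod_pow_single {M : Type*} [CommMonoid M] (x : Fin m → M) (j : Fin m) :
    (∏ i, x i ^ (Pi.single j 1 : Fin m → ℕ) i) = x j := by
  rw [Finset.prod_eq_single j]
  · simp
  · intro i _ hij; simp [Pi.single_eq_of_ne hij]
  · simp

lemma prod_pow_add {M : Type*} [CommMonoid M] (x : Fin m → M) (I J : Fin m → ℕ) :
    (∏ i, x i ^ (I + J) i) = (∏ i, x i ^ I i) * ∏ i, x i ^ J i := by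
  simp only [Pi.add_apply, pow_add, Finset.prod_mul_distrib]

lemma mweight_single {ρ : Fin m → ℝ} (j : Fin m) :
    mweight ρ (Pi.single j 1) = ρ j := prod_pow_single ρ j

/-- Induction on multi-indices. -/
lemma multiindex_induction {P : (Fin m → ℕ) → Prop} (h0 : P 0)
    (hstep : ∀ (j : Fin m) (I : Fin m → ℕ), P I → P (Pi.single j 1 + I)) :
    ∀ I, P I := by
  suffices H : ∀ (n : ℕ) (I : Fin m → ℕ), (∑ i, I i) = n → P I by
    intro I; exact H _ I rfl
  intro n
  induction n with
  | zero =>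
    intro I hI
    have : I = 0 := by
      funext i
      exact Finset.sum_eq_zero_iff.mp hI i (Finset.mem_univ i)
    rwa [this]
  | succ n ih =>
    intro I hI
    have hne : ∃ j, 0 < I j := by
      by_contra hc
      push_neg at hc
      simp only [Nat.le_zero] at hc
      simp [Finset.sum_congr rfl fun i _ => hc i] at hI
    obtain ⟨j, hj⟩ := hne
    set I' : Fin m → ℕ := Function.update I j (I j - 1) with hI'
    have hIeq : I = Pi.single j 1 + I' := by
      funext i
      by_cases h : i = j
      · subst h
        simp [hI', Pi.single_eq_same, Function.update_self]
        omega
      · simp [hI', Pi.single_eq_of_ne h, Function.update_of_ne h]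
    have hsum : (∑ i, I' i) = n := by
      have := hI
      rw [hIeq] at this
      simp only [Pi.add_apply] at this
      rw [Finset.sum_add_distrib] at this
      have hs : (∑ i, (Pi.single j 1 : Fin m → ℕ) i) = 1 := by
        rw [Finset.sum_eq_single j] <;> simp +contextual [Pi.single_eq_of_ne]
      omega
    rw [hIeq]
    exact hstep j I' (ih I' hsum)

end TateAux

namespace TateAux

open Finset Filter IsUltrametricDist

section Tate

variable {k : Type u} [NormedField k]
variable {m : ℕ} {ρ : Fin m → ℝ}
variable {B : Type v} [NormedCommRing B] [NormedAlgebra k B]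
variable (hρ : ∀ i, 0 < ρ i) (hB : IsTateAlgebra k ρ B)

lemma bddAbove_coeff (a : B) :
    BddAbove (Set.range fun I => ‖hB.coeff a I‖ * mweight ρ I) :=
  (hB.coeff_tendsto a).bddAbove_range_of_cofinite

lemma coeff_le_norm (a : B) (I : Fin m → ℕ) :
    ‖hB.coeff a I‖ * mweight ρ I ≤ ‖a‖ := by
  rw [hB.norm_eq a]
  exact le_ciSup (bddAbove_coeff hB a) I

lemma norm_le_of_coeff_le (a : B) {C : ℝ}
    (h : ∀ I, ‖hB.coeff a I‖ * mweight ρ I ≤ C) : ‖a‖ ≤ C := by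
  rw [hB.norm_eq a]
  exact ciSup_le h

lemma coeff_sub (a b : B) (I : Fin m → ℕ) :
    hB.coeff (a - b) I = hB.coeff a I - hB.coeff b I := by
  rw [map_sub]; rfl

include hρ hB in
lemma ultra [IsUltrametricDist k] : IsUltrametricDist B := by
  apply isUltrametricDist_of_forall_norm_add_le_max_norm
  intro x y
  apply norm_le_of_coeff_le hB
  intro I
  have hxy : hB.coeff (x + y) I = hB.coeff x I + hB.coeff y I := by
    rw [map_add]; rfl
  rw [hxy]
  calc ‖hB.coeff x I + hB.coeff y I‖ * mweight ρ I
      ≤ max ‖hB.coeff x I‖ ‖hB.coeff y I‖ * mweight ρ I := by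
        have := norm_add_le_max (hB.coeff x I) (hB.coeff y I)
        exact mul_le_mul_of_nonneg_right this (mweight_pos hρ I).le
    _ = max (‖hB.coeff x I‖ * mweight ρ I) (‖hB.coeff y I‖ * mweight ρ I) :=
        max_mul_of_nonneg _ _ (mweight_pos hρ I).le
    _ ≤ max ‖x‖ ‖y‖ :=
        max_le_max (coeff_le_norm hB x I) (coeff_le_norm hB y I)

include hρ hB in
lemma complete [CompleteSpace k] : CompleteSpace B := by
  apply Metric.complete_of_cauchySeq_tendsto
  intro u hu
  have hcc : ∀ I : Fin m → ℕ, CauchySeq (fun n => hB.coeff (u n) I) := by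
    intro I
    rw [Metric.cauchySeq_iff] at hu ⊢
    intro ε hε
    obtain ⟨N, hN⟩ := hu (ε * mweight ρ I) (mul_pos hε (mweight_pos hρ I))
    refine ⟨N, fun p hp q hq => ?_⟩
    have h1 : dist (hB.coeff (u p) I) (hB.coeff (u q) I) * mweight ρ I ≤ dist (u p) (u q) := by
      rw [dist_eq_norm, dist_eq_norm, ← coeff_sub hB]
      exact coeff_le_norm hB _ I
    have h2 := lt_of_le_of_lt h1 (hN p hp q hq)
    exact lt_of_mul_lt_mul_right h2 (mweight_pos hρ I).le
  choose g hg using fun I => cauchySeq_tendsto_of_complete (hcc I)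
  -- uniform bound
  have key : ∀ ε : ℝ, 0 < ε → ∃ N, ∀ n ≥ N, ∀ I,
      ‖hB.coeff (u n) I - g I‖ * mweight ρ I ≤ ε := by
    intro ε hε
    rw [Metric.cauchySeq_iff] at hu
    obtain ⟨N, hN⟩ := hu ε hε
    refine ⟨N, fun n hn I => ?_⟩
    have htd : Tendsto (fun q => ‖hB.coeff (u n) I - hB.coeff (u q) I‖ * mweight ρ I)
        atTop (nhds (‖hB.coeff (u n) I - g I‖ * mweight ρ I)) := by
      apply Tendsto.mul_const
      exact ((hg I).const_sub _).norm
    apply le_of_tendsto htd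
    filter_upwards [eventually_ge_atTop N] with q hq
    have h1 : ‖hB.coeff (u n) I - hB.coeff (u q) I‖ * mweight ρ I ≤ ‖u n - u q‖ := by
      rw [← coeff_sub hB]
      exact coeff_le_norm hB _ I
    refine h1.trans ?_
    have := hN n hn q hq
    rw [dist_eq_norm] at this
    exact this.le
  -- g is a null family
  have hgnull : Tendsto (fun I => ‖g I‖ * mweight ρ I) cofinite (nhds 0) := by
    rw [Metric.tendsto_nhds]
    intro ε hε
    obtain ⟨N, hN⟩ := key (ε / 3) (by linarith)
    have hfin := (hB.coeff_tendsto (u N))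
    rw [Metric.tendsto_nhds] at hfin
    filter_upwards [hfin (ε / 3) (by linarith)] with I hI
    have h0 : (0:ℝ) ≤ ‖g I‖ * mweight ρ I :=
      mul_nonneg (norm_nonneg _) (mweight_pos hρ I).le
    rw [Real.dist_eq, sub_zero, abs_of_nonneg h0]
    rw [Real.dist_eq, sub_zero,
      abs_of_nonneg (mul_nonneg (norm_nonneg _) (mweight_pos hρ I).le)] at hI
    have h2 := hN N le_rfl I
    have h3 : ‖g I‖ ≤ ‖hB.coeff (u N) I - g I‖ + ‖hB.coeff (u N) I‖ := by
      have := norm_sub_norm_le (hB.coeff (u N) I) (g I)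
      have h4 := norm_add_le (g I - hB.coeff (u N) I) (hB.coeff (u N) I)
      simpa [norm_sub_rev] using h4
    calc ‖g I‖ * mweight ρ I
        ≤ (‖hB.coeff (u N) I - g I‖ + ‖hB.coeff (u N) I‖) * mweight ρ I :=
          mul_le_mul_of_nonneg_right h3 (mweight_pos hρ I).le
      _ = ‖hB.coeff (u N) I - g I‖ * mweight ρ I + ‖hB.coeff (u N) I‖ * mweight ρ I := by ring
      _ < ε := by linarith
  obtain ⟨b, hb⟩ := hB.coeff_surjective g hgnull
  refine ⟨b, ?_⟩
  rw [Metric.tendsto_atTop]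
  intro ε hε
  obtain ⟨N, hN⟩ := key (ε / 2) (by linarith)
  refine ⟨N, fun n hn => ?_⟩
  rw [dist_eq_norm]
  have : ‖u n - b‖ ≤ ε / 2 := by
    apply norm_le_of_coeff_le hB
    intro I
    rw [coeff_sub hB, hb]
    exact hN n hn I
  linarith

end Tate

end TateAux

namespace TateAux

open Finset Filter IsUltrametricDist

section Monomials

variable {k : Type u} [NormedField k]
variable {m : ℕ} {ρ : Fin m → ℝ}
variable {B : Type v} [NormedCommRing B] [NormedAlgebra k B]
variable (hρ : ∀ i, 0 < ρ i) (hB : IsTateAlgebra k ρ B)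

lemma coeff_monomial (I : Fin m → ℕ) :
    hB.coeff (∏ i, hB.T i ^ I i) = fun K => if K = I then (1:k) else 0 := by
  induction I using multiindex_induction with
  | h0 =>
    have h1 : (∏ i, hB.T i ^ (0 : Fin m → ℕ) i) = 1 := by simp
    rw [h1, hB.coeff_one]
  | hstep j I ih =>
    have hsplit : (∏ i, hB.T i ^ ((Pi.single j 1 + I : Fin m → ℕ)) i) = hB.T j * ∏ i, hB.T i ^ I i := by
      rw [prod_pow_add, prod_pow_single]
    rw [hsplit]
    funext K
    rw [hB.coeff_mul, hB.coeff_T j, ih]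
    have hterm : ∀ p : (Fin m → ℕ) × (Fin m → ℕ),
        ((if p.1 = Pi.single j 1 then (1:k) else 0) * (if p.2 = I then (1:k) else 0))
        = if p = (Pi.single j 1, I) then (1:k) else 0 := by
      intro p
      rcases p with ⟨p1, p2⟩
      simp only [Prod.mk.injEq, Prod.ext_iff]
      split_ifs with h1 h2 h3 h4 <;> simp_all
    rw [Finset.sum_congr rfl (fun p _ => hterm p), Finset.sum_ite_eq']
    have hmem : ((Pi.single j 1, I) : (Fin m → ℕ) × (Fin m → ℕ)) ∈
        (Finset.Iic K ×ˢ Finset.Iic K).filter (fun p => p.1 + p.2 = K)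
        ↔ K = Pi.single j 1 + I := by
      simp only [Finset.mem_filter, Finset.mem_product, Finset.mem_Iic]
      constructor
      · rintro ⟨-, h⟩; exact h.symm
      · rintro rfl
        exact ⟨⟨le_self_add, le_add_self⟩, rfl⟩
    by_cases hK : K = Pi.single j 1 + I
    · rw [if_pos (hmem.mpr hK), if_pos hK]
    · rw [if_neg (fun h => hK (hmem.mp h)), if_neg hK]

include hρ in
lemma norm_monomial (I : Fin m → ℕ) :
    ‖∏ i, hB.T i ^ I i‖ = mweight ρ I := by
  apply le_antisymm
  · apply norm_le_of_coeff_le hB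
    intro K
    rw [coeff_monomial hB]
    by_cases hK : K = I
    · subst hK; simp
    · simp [hK, (mweight_pos hρ I).le]
  · have h := le_ciSup (bddAbove_coeff hB (∏ i, hB.T i ^ I i)) I
    rw [← hB.norm_eq] at h
    refine le_trans ?_ h
    rw [coeff_monomial hB]
    simp

include hρ hB in
lemma norm_one_B : ‖(1 : B)‖ = 1 := by
  have h := norm_monomial hρ hB 0
  simp only [mweight] at h
  simpa using h

include hρ in
lemma norm_T (j : Fin m) : ‖hB.T j‖ = ρ j := by
  have h := norm_monomial hρ hB (Pi.single j 1)
  rwa [prod_pow_single, mweight_single] at h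

include hρ hB in
lemma norm_prod_pow_le {c : Fin m → B} (hc : ∀ i, ‖c i‖ ≤ ρ i) (I : Fin m → ℕ) :
    ‖∏ i, c i ^ I i‖ ≤ mweight ρ I := by
  induction I using multiindex_induction with
  | h0 =>
    have h1 : (∏ i, c i ^ (0 : Fin m → ℕ) i) = 1 := by simp
    rw [h1]
    rw [mweight]
    simp [norm_one_B hρ hB]
  | hstep j I ih =>
    have hsplit : (∏ i, c i ^ ((Pi.single j 1 + I : Fin m → ℕ)) i) = c j * ∏ i, c i ^ I i := by
      rw [prod_pow_add, prod_pow_single]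
    rw [hsplit, mweight_add, mweight_single]
    calc ‖c j * ∏ i, c i ^ I i‖ ≤ ‖c j‖ * ‖∏ i, c i ^ I i‖ := norm_mul_le _ _
      _ ≤ ρ j * mweight ρ I := by
          apply mul_le_mul (hc j) ih (norm_nonneg _) (hρ j).le

end Monomials

end TateAux

namespace TateAux

open Finset Filter IsUltrametricDist

instance {m : ℕ} : Finset.HasAntidiagonal (Fin m → ℕ) where
  antidiagonal I := (Finset.Iic I ×ˢ Finset.Iic I).filter (fun p => p.1 + p.2 = I)
  mem_antidiagonal {I} {a} := by
    simp only [Finset.mem_filter, Finset.mem_product, Finset.mem_Iic]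
    constructor
    · rintro ⟨-, h⟩; exact h
    · rintro h; exact ⟨⟨h ▸ le_self_add, h ▸ le_add_self⟩, h⟩

lemma summable_of_norm_cofinite {M ι : Type*} [SeminormedAddCommGroup M]
    [IsUltrametricDist M] [CompleteSpace M] {f : ι → M}
    (h : Tendsto (fun i => ‖f i‖) cofinite (nhds 0)) : Summable f :=
  NonarchimedeanAddGroup.summable_of_tendsto_cofinite_zero
    (tendsto_zero_iff_norm_tendsto_zero.mpr h)

lemma finite_of_ge {α : Type*} {u : α → ℝ} (hu : Tendsto u cofinite (nhds 0))
    {δ : ℝ} (hδ : 0 < δ) : {a | δ ≤ u a}.Finite := by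
  have h := Metric.tendsto_nhds.mp hu δ hδ
  rw [eventually_cofinite] at h
  apply h.subset
  intro a ha
  simp only [Set.mem_setOf_eq, Real.dist_eq, sub_zero, not_lt]
  calc δ ≤ u a := ha
    _ ≤ |u a| := le_abs_self _

lemma tendsto_cofinite_mul {α β : Type*} {u : α → ℝ} {v : β → ℝ}
    (hu0 : ∀ a, 0 ≤ u a) (hv0 : ∀ b, 0 ≤ v b)
    (hu : Tendsto u cofinite (nhds 0)) (hv : Tendsto v cofinite (nhds 0)) :
    Tendsto (fun p : α × β => u p.1 * v p.2) cofinite (nhds 0) := by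
  obtain ⟨Cu, hCu⟩ := hu.bddAbove_range_of_cofinite
  obtain ⟨Cv, hCv⟩ := hv.bddAbove_range_of_cofinite
  have hCu' : ∀ a, u a ≤ max Cu 0 := fun a => le_max_of_le_left (hCu (Set.mem_range_self a))
  have hCv' : ∀ b, v b ≤ max Cv 0 := fun b => le_max_of_le_left (hCv (Set.mem_range_self b))
  have hCu0 : (0:ℝ) ≤ max Cu 0 := le_max_right _ _
  have hCv0 : (0:ℝ) ≤ max Cv 0 := le_max_right _ _
  rw [Metric.tendsto_nhds]
  intro ε hε
  rw [eventually_cofinite]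
  have hδu : 0 < ε / (max Cv 0 + 1) := by positivity
  have hδv : 0 < ε / (max Cu 0 + 1) := by positivity
  apply Set.Finite.subset ((finite_of_ge hu hδu).prod (finite_of_ge hv hδv))
  intro p hp
  simp only [Set.mem_setOf_eq, Real.dist_eq, sub_zero, not_lt] at hp
  have hp' : ε ≤ u p.1 * v p.2 :=
    hp.trans_eq (abs_of_nonneg (mul_nonneg (hu0 _) (hv0 _)))
  constructor
  · show ε / (max Cv 0 + 1) ≤ u p.1
    rw [div_le_iff₀ (by positivity)]
    calc ε ≤ u p.1 * v p.2 := hp'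
      _ ≤ u p.1 * (max Cv 0 + 1) := by
          apply mul_le_mul_of_nonneg_left ((hCv' _).trans (by linarith)) (hu0 _)
  · show ε / (max Cu 0 + 1) ≤ v p.2
    rw [div_le_iff₀ (by positivity)]
    calc ε ≤ u p.1 * v p.2 := hp'
      _ ≤ v p.2 * (max Cu 0 + 1) := by
          rw [mul_comm]
          apply mul_le_mul_of_nonneg_left ((hCu' _).trans (by linarith)) (hv0 _)

end TateAux

namespace TateAux

open Finset Filter IsUltrametricDist

section Partial

variable {k : Type u} [NormedField k]
variable {m : ℕ} {ρ : Fin m → ℝ}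
variable {B : Type v} [NormedCommRing B] [NormedAlgebra k B]
variable (hρ : ∀ i, 0 < ρ i) (hB : IsTateAlgebra k ρ B)

lemma coeff_partial (a : B) (F : Finset (Fin m → ℕ)) (K : Fin m → ℕ) :
    hB.coeff (∑ I ∈ F, hB.coeff a I • ∏ i, hB.T i ^ I i) K
      = if K ∈ F then hB.coeff a K else 0 := by
  rw [map_sum]
  rw [Finset.sum_apply]
  have hterm : ∀ I ∈ F, (hB.coeff (hB.coeff a I • ∏ i, hB.T i ^ I i)) K
      = if K = I then hB.coeff a I else 0 := by
    intro I _
    rw [map_smul, coeff_monomial hB]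
    simp only [Pi.smul_apply, smul_eq_mul, mul_ite, mul_one, mul_zero]
  rw [Finset.sum_congr rfl hterm, Finset.sum_ite_eq]

lemma exists_partial (a : B) {ε : ℝ} (hε : 0 < ε) :
    ∃ F₀ : Finset (Fin m → ℕ), ∀ F : Finset (Fin m → ℕ), F₀ ⊆ F →
      ‖a - ∑ I ∈ F, hB.coeff a I • ∏ i, hB.T i ^ I i‖ ≤ ε := by
  have hfin := finite_of_ge (hB.coeff_tendsto a) hε
  refine ⟨hfin.toFinset, fun F hF => ?_⟩
  apply norm_le_of_coeff_le hB
  intro K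
  rw [coeff_sub hB, coeff_partial hB]
  by_cases hK : K ∈ F
  · rw [if_pos hK, sub_self]
    simp only [norm_zero, zero_mul]
    exact hε.le
  · rw [if_neg hK, sub_zero]
    have hK0 : K ∉ hfin.toFinset := fun h => hK (hF h)
    rw [Set.Finite.mem_toFinset] at hK0
    simp only [Set.mem_setOf_eq, not_le] at hK0
    exact hK0.le

lemma hasSum_monomials (a : B) :
    HasSum (fun I => hB.coeff a I • ∏ i, hB.T i ^ I i) a := by
  have : Tendsto (fun F : Finset (Fin m → ℕ) =>
      ∑ I ∈ F, hB.coeff a I • ∏ i, hB.T i ^ I i) atTop (nhds a) := by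
    rw [Metric.tendsto_nhds]
    intro ε hε
    rw [eventually_atTop]
    obtain ⟨F₀, hF₀⟩ := exists_partial hB a (half_pos hε)
    refine ⟨F₀, fun F hF => ?_⟩
    rw [dist_eq_norm, ← norm_sub_rev]
    exact (hF₀ F hF).trans_lt (half_lt_self hε)
  exact this

lemma algHom_eq_of_boundedHom {A : Type*} [NormedCommRing A] [NormedAlgebra k A]
    (φ₁ φ₂ : B →ₐ[k] A) (h₁ : IsBoundedHom φ₁.toRingHom) (h₂ : IsBoundedHom φ₂.toRingHom)
    (hT : ∀ i, φ₁ (hB.T i) = φ₂ (hB.T i)) : ∀ a, φ₁ a = φ₂ a := by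
  obtain ⟨C₁, hC₁⟩ := h₁
  obtain ⟨C₂, hC₂⟩ := h₂
  intro a
  set M : ℝ := max C₁ 0 + max C₂ 0 with hM
  have hM0 : 0 ≤ M := by positivity
  have key : ∀ ε : ℝ, 0 < ε → ‖φ₁ a - φ₂ a‖ ≤ M * ε := by
    intro ε hε
    obtain ⟨F₀, hF₀⟩ := exists_partial hB a hε
    set P : B := ∑ I ∈ F₀, hB.coeff a I • ∏ i, hB.T i ^ I i with hP
    have hPeq : φ₁ P = φ₂ P := by
      rw [hP, map_sum, map_sum]
      refine Finset.sum_congr rfl fun I _ => ?_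
      rw [map_smul, map_smul, map_prod, map_prod]
      congr 1
      exact Finset.prod_congr rfl fun i _ => by rw [map_pow, map_pow, hT i]
    have hsplit : φ₁ a - φ₂ a = φ₁ (a - P) - φ₂ (a - P) := by
      rw [map_sub, map_sub, hPeq]; ring
    have hnorm : ‖a - P‖ ≤ ε := hF₀ F₀ subset_rfl
    rw [hsplit]
    calc ‖φ₁ (a - P) - φ₂ (a - P)‖
        ≤ ‖φ₁ (a - P)‖ + ‖φ₂ (a - P)‖ := norm_sub_le _ _
      _ ≤ max C₁ 0 * ε + max C₂ 0 * ε := by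
          have e₁ : ‖φ₁ (a - P)‖ ≤ max C₁ 0 * ε := by
            refine (hC₁ (a - P)).trans ?_
            exact mul_le_mul (le_max_left _ _) hnorm (norm_nonneg _) (le_max_right _ _)
          have e₂ : ‖φ₂ (a - P)‖ ≤ max C₂ 0 * ε := by
            refine (hC₂ (a - P)).trans ?_
            exact mul_le_mul (le_max_left _ _) hnorm (norm_nonneg _) (le_max_right _ _)
          linarith
      _ = M * ε := by rw [hM]; ring
  have h0 : ‖φ₁ a - φ₂ a‖ ≤ 0 := by
    by_contra hc
    push_neg at hc
    have hk := key (‖φ₁ a - φ₂ a‖ / (2 * (M + 1))) (by positivity)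
    have h1 : M / (2 * (M + 1)) < 1 := by
      rw [div_lt_one (by positivity)]; linarith
    have h2 : M * (‖φ₁ a - φ₂ a‖ / (2 * (M + 1))) < ‖φ₁ a - φ₂ a‖ := by
      have : M * (‖φ₁ a - φ₂ a‖ / (2 * (M + 1))) = (M / (2 * (M + 1))) * ‖φ₁ a - φ₂ a‖ := by
        ring
      rw [this]
      calc (M / (2 * (M + 1))) * ‖φ₁ a - φ₂ a‖ < 1 * ‖φ₁ a - φ₂ a‖ :=
            mul_lt_mul_of_pos_right h1 hc
        _ = ‖φ₁ a - φ₂ a‖ := one_mul _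
    linarith
  have := le_antisymm h0 (norm_nonneg _)
  rw [norm_eq_zero] at this
  exact sub_eq_zero.mp this

end Partial

end TateAux

namespace TateAux

open Finset Filter IsUltrametricDist

set_option linter.unusedSectionVars false

section Subst

variable {k : Type u} [NormedField k] [CompleteSpace k] [IsUltrametricDist k]
variable {m : ℕ} {ρ : Fin m → ℝ}
variable {B : Type v} [NormedCommRing B] [NormedAlgebra k B]

/-- Substitution: `a = ∑ a_I Θ^I ↦ ∑ a_I c^I`. -/
def substFun (hB : IsTateAlgebra k ρ B) (c : Fin m → B) (a : B) : B :=
  ∑' I, hB.coeff a I • ∏ i, c i ^ I i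

variable (hρ : ∀ i, 0 < ρ i) (hB : IsTateAlgebra k ρ B)
variable {c : Fin m → B} (hc : ∀ i, ‖c i‖ ≤ ρ i)

include hρ hc in
lemma norm_subst_term_le (a : B) (I : Fin m → ℕ) :
    ‖hB.coeff a I • ∏ i, c i ^ I i‖ ≤ ‖hB.coeff a I‖ * mweight ρ I := by
  rw [norm_smul]
  exact mul_le_mul_of_nonneg_left (norm_prod_pow_le hρ hB hc I) (norm_nonneg _)

include hρ hc in
lemma tendsto_norm_subst (a : B) :
    Tendsto (fun I => ‖hB.coeff a I • ∏ i, c i ^ I i‖) cofinite (nhds 0) :=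
  squeeze_zero (fun _ => norm_nonneg _) (norm_subst_term_le hρ hB hc a)
    (hB.coeff_tendsto a)

include hρ hc in
lemma summable_subst (a : B) : Summable fun I => hB.coeff a I • ∏ i, c i ^ I i := by
  haveI := ultra hρ hB
  haveI := complete hρ hB
  exact summable_of_norm_cofinite (tendsto_norm_subst hρ hB hc a)

include hρ hc in
lemma norm_substFun_le (a : B) : ‖substFun hB c a‖ ≤ ‖a‖ := by
  haveI := ultra hρ hB
  exact norm_tsum_le_of_forall_le_of_nonneg (norm_nonneg a)
    (fun I => (norm_subst_term_le hρ hB hc a I).trans (coeff_le_norm hB a I))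

include hρ hc in
lemma substFun_add (a b : B) :
    substFun hB c (a + b) = substFun hB c a + substFun hB c b := by
  unfold substFun
  have hterm : ∀ I, hB.coeff (a + b) I • ∏ i, c i ^ I i
      = hB.coeff a I • ∏ i, c i ^ I i + hB.coeff b I • ∏ i, c i ^ I i := by
    intro I
    have : hB.coeff (a + b) I = hB.coeff a I + hB.coeff b I := by rw [map_add]; rfl
    rw [this, add_smul]
  rw [tsum_congr hterm]
  exact Summable.tsum_add (summable_subst hρ hB hc a) (summable_subst hρ hB hc b)

lemma substFun_smul (r : k) (a : B) :
    substFun hB c (r • a) = r • substFun hB c a := by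
  unfold substFun
  have hterm : ∀ I, hB.coeff (r • a) I • ∏ i, c i ^ I i
      = r • (hB.coeff a I • ∏ i, c i ^ I i) := by
    intro I
    have : hB.coeff (r • a) I = r • hB.coeff a I := by rw [map_smul]; rfl
    rw [this, smul_eq_mul, mul_smul]
  rw [tsum_congr hterm, tsum_const_smul'']

lemma substFun_zero : substFun hB c 0 = 0 := by
  unfold substFun
  have hterm : ∀ I, hB.coeff (0 : B) I • ∏ i, c i ^ I i = 0 := by
    intro I
    have : hB.coeff (0 : B) I = 0 := by rw [map_zero]; rfl
    rw [this, zero_smul]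
  rw [tsum_congr hterm, tsum_zero]

lemma substFun_one : substFun hB c 1 = 1 := by
  unfold substFun
  rw [hB.coeff_one]
  rw [tsum_eq_single 0 (fun I hI => by simp only [if_neg hI, zero_smul])]
  simp

lemma substFun_T (j : Fin m) : substFun hB c (hB.T j) = c j := by
  unfold substFun
  rw [hB.coeff_T]
  rw [tsum_eq_single (Pi.single j 1) (fun I hI => by simp only [if_neg hI, zero_smul])]
  simpa using prod_pow_single c j

include hρ hc in
lemma substFun_mul (a b : B) :
    substFun hB c (a * b) = substFun hB c a * substFun hB c b := by
  haveI := ultra hρ hB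
  haveI := complete hρ hB
  have hfa := summable_subst hρ hB hc a
  have hfb := summable_subst hρ hB hc b
  have hta := tendsto_norm_subst hρ hB hc a
  have htb := tendsto_norm_subst hρ hB hc b
  have ht := tendsto_cofinite_mul (fun _ => norm_nonneg _) (fun _ => norm_nonneg _) hta htb
  have ht2 : Tendsto (fun p : (Fin m → ℕ) × (Fin m → ℕ) =>
      ‖(hB.coeff a p.1 • ∏ i, c i ^ p.1 i) * (hB.coeff b p.2 • ∏ i, c i ^ p.2 i)‖)
      cofinite (nhds 0) :=
    squeeze_zero (fun _ => norm_nonneg _) (fun p => norm_mul_le _ _) ht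
  have hprod : Summable (fun p : (Fin m → ℕ) × (Fin m → ℕ) =>
      (hB.coeff a p.1 • ∏ i, c i ^ p.1 i) * (hB.coeff b p.2 • ∏ i, c i ^ p.2 i)) :=
    summable_of_norm_cofinite ht2
  unfold substFun
  rw [Summable.tsum_mul_tsum_eq_tsum_sum_antidiagonal hfa hfb hprod]
  apply tsum_congr
  intro K
  rw [hB.coeff_mul]
  have hset : Finset.HasAntidiagonal.antidiagonal K
      = (Finset.Iic K ×ˢ Finset.Iic K).filter (fun p => p.1 + p.2 = K) := rfl
  rw [hset, Finset.sum_smul]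
  apply Finset.sum_congr rfl
  intro p hp
  have hpK : p.1 + p.2 = K := (Finset.mem_filter.mp hp).2
  rw [smul_mul_smul_comm, ← prod_pow_add, hpK]

/-- The substitution algebra endomorphism of the Tate algebra. -/
def substHom : B →ₐ[k] B :=
  AlgHom.mk'
    { toFun := substFun hB c
      map_one' := substFun_one hB
      map_mul' := substFun_mul hρ hB hc
      map_zero' := substFun_zero hB
      map_add' := substFun_add hρ hB hc }
    (substFun_smul hB)

lemma substHom_apply (a : B) : substHom hρ hB hc a = substFun hB c a := rfl

end Subst

end TateAux

namespace TateAux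

open Finset Filter IsUltrametricDist

set_option linter.unusedSectionVars false

section Subst2

variable {k : Type u} [NormedField k] [CompleteSpace k] [IsUltrametricDist k]
variable {m : ℕ} {ρ : Fin m → ℝ}
variable {B : Type v} [NormedCommRing B] [NormedAlgebra k B]
variable (hρ : ∀ i, 0 < ρ i) (hB : IsTateAlgebra k ρ B)
variable {c : Fin m → B} (hc : ∀ i, ‖c i‖ ≤ ρ i)
variable {t : ℝ} (ht0 : 0 ≤ t) (hT : ∀ i, ‖c i - hB.T i‖ ≤ t * ρ i)

include hρ hc ht0 hT in
lemma norm_prod_sub_le (I : Fin m → ℕ) :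
    ‖(∏ i, c i ^ I i) - ∏ i, hB.T i ^ I i‖ ≤ t * mweight ρ I := by
  haveI := ultra hρ hB
  induction I using multiindex_induction with
  | h0 =>
    have e1 : (∏ i, c i ^ (0 : Fin m → ℕ) i) = 1 := by simp
    have e2 : (∏ i, hB.T i ^ (0 : Fin m → ℕ) i) = 1 := by simp
    rw [e1, e2, sub_self, norm_zero]
    exact mul_nonneg ht0 (mweight_pos hρ 0).le
  | hstep j I ih =>
    have e1 : (∏ i, c i ^ ((Pi.single j 1 + I : Fin m → ℕ)) i)
        = c j * ∏ i, c i ^ I i := by rw [prod_pow_add, prod_pow_single]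
    have e2 : (∏ i, hB.T i ^ ((Pi.single j 1 + I : Fin m → ℕ)) i)
        = hB.T j * ∏ i, hB.T i ^ I i := by rw [prod_pow_add, prod_pow_single]
    rw [e1, e2]
    have key : c j * ∏ i, c i ^ I i - hB.T j * ∏ i, hB.T i ^ I i
        = (c j - hB.T j) * ∏ i, c i ^ I i
          + hB.T j * ((∏ i, c i ^ I i) - ∏ i, hB.T i ^ I i) := by ring
    rw [key]
    refine (norm_add_le_max _ _).trans ?_
    have hw : mweight ρ (Pi.single j 1 + I) = ρ j * mweight ρ I := by
      rw [mweight_add, mweight_single]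
    have b1 : ‖(c j - hB.T j) * ∏ i, c i ^ I i‖ ≤ t * mweight ρ (Pi.single j 1 + I) := by
      refine (norm_mul_le _ _).trans ?_
      rw [hw]
      calc ‖c j - hB.T j‖ * ‖∏ i, c i ^ I i‖
          ≤ (t * ρ j) * mweight ρ I :=
            mul_le_mul (hT j) (norm_prod_pow_le hρ hB hc I) (norm_nonneg _)
              (mul_nonneg ht0 (hρ j).le)
        _ = t * (ρ j * mweight ρ I) := by ring
    have b2 : ‖hB.T j * ((∏ i, c i ^ I i) - ∏ i, hB.T i ^ I i)‖
        ≤ t * mweight ρ (Pi.single j 1 + I) := by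
      refine (norm_mul_le _ _).trans ?_
      rw [hw, norm_T hρ hB]
      calc ρ j * ‖(∏ i, c i ^ I i) - ∏ i, hB.T i ^ I i‖
          ≤ ρ j * (t * mweight ρ I) :=
            mul_le_mul_of_nonneg_left ih (hρ j).le
        _ = t * (ρ j * mweight ρ I) := by ring
    exact max_le b1 b2

include hρ hc ht0 hT in
lemma norm_substFun_sub_le (a : B) : ‖substFun hB c a - a‖ ≤ t * ‖a‖ := by
  haveI := ultra hρ hB
  haveI := complete hρ hB
  have hS := summable_subst hρ hB hc a
  have hcT : ∀ i, ‖hB.T i‖ ≤ ρ i := fun i => le_of_eq (norm_T hρ hB i)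
  have hTS := summable_subst hρ hB hcT a
  have hrepr : (∑' I, hB.coeff a I • ∏ i, hB.T i ^ I i) = a :=
    (hasSum_monomials hB a).tsum_eq
  have hkey : substFun hB c a - a
      = ∑' I, (hB.coeff a I • ∏ i, c i ^ I i - hB.coeff a I • ∏ i, hB.T i ^ I i) := by
    rw [Summable.tsum_sub hS hTS]
    unfold substFun
    rw [hrepr]
  rw [hkey]
  apply norm_tsum_le_of_forall_le_of_nonneg (mul_nonneg ht0 (norm_nonneg a))
  intro I
  rw [← smul_sub, norm_smul]
  calc ‖hB.coeff a I‖ * ‖(∏ i, c i ^ I i) - ∏ i, hB.T i ^ I i‖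
      ≤ ‖hB.coeff a I‖ * (t * mweight ρ I) :=
        mul_le_mul_of_nonneg_left (norm_prod_sub_le hρ hB hc ht0 hT I) (norm_nonneg _)
    _ = t * (‖hB.coeff a I‖ * mweight ρ I) := by ring
    _ ≤ t * ‖a‖ := mul_le_mul_of_nonneg_left (coeff_le_norm hB a I) ht0

include hρ hc ht0 hT in
lemma norm_substFun_eq (ht1 : t < 1) (a : B) : ‖substFun hB c a‖ = ‖a‖ := by
  haveI := ultra hρ hB
  by_cases ha : a = 0
  · rw [ha, substFun_zero hB]
  · have h0 : 0 < ‖a‖ := norm_pos_iff.mpr ha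
    have hd : ‖substFun hB c a - a‖ < ‖a‖ :=
      (norm_substFun_sub_le hρ hB hc ht0 hT a).trans_lt
        (mul_lt_of_lt_one_left h0 ht1)
    apply le_antisymm
    · have h2 : substFun hB c a = a + (substFun hB c a - a) := by ring
      rw [h2]
      exact (norm_add_le_max _ _).trans (max_le le_rfl hd.le)
    · have h3 : a = substFun hB c a + (a - substFun hB c a) := by ring
      have h4 := norm_add_le_max (substFun hB c a) (a - substFun hB c a)
      rw [← h3] at h4
      rcases le_max_iff.mp h4 with h | h
      · exact h
      · exfalso
        rw [norm_sub_rev] at h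
        exact absurd (h.trans_lt hd) (lt_irrefl _)

include hρ hc ht0 hT in
lemma substFun_surjective (ht1 : t < 1) : Function.Surjective (substFun hB c) := by
  haveI := ultra hρ hB
  haveI := complete hρ hB
  intro b
  set σ : B →ₐ[k] B := substHom hρ hB hc with hσdef
  set D : B →ₗ[k] B := σ.toLinearMap - LinearMap.id with hDdef
  have hDx : ∀ x : B, D x = substFun hB c x - x := by
    intro x
    rw [hDdef]
    simp only [LinearMap.sub_apply, LinearMap.id_apply, AlgHom.toLinearMap_apply]
    rfl
  have hDb : ∀ x, ‖D x‖ ≤ t * ‖x‖ := fun x => by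
    rw [hDx]; exact norm_substFun_sub_le hρ hB hc ht0 hT x
  set Dc : B →L[k] B := LinearMap.mkContinuous D t hDb with hDc
  have hDcx : ∀ x, Dc x = D x := fun x => rfl
  set u : ℕ → B := fun n => (fun x => -(Dc x))^[n] b with hu
  have hu0 : u 0 = b := rfl
  have husucc : ∀ n, u (n + 1) = -(Dc (u n)) := by
    intro n
    rw [hu]
    exact Function.iterate_succ_apply' _ n b
  have hnorm : ∀ n, ‖u n‖ ≤ ‖b‖ * t ^ n := by
    intro n
    induction n with
    | zero => simp [hu0]
    | succ n ih =>
      rw [husucc n, norm_neg]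
      calc ‖Dc (u n)‖ = ‖D (u n)‖ := by rw [hDcx]
        _ ≤ t * ‖u n‖ := hDb _
        _ ≤ t * (‖b‖ * t ^ n) := mul_le_mul_of_nonneg_left ih ht0
        _ = ‖b‖ * t ^ (n + 1) := by ring
  have hsum : Summable u :=
    Summable.of_norm_bounded ((summable_geometric_of_lt_one ht0 ht1).mul_left ‖b‖) hnorm
  refine ⟨∑' n, u n, ?_⟩
  have hDa : Dc (∑' n, u n) = ∑' n, Dc (u n) := ContinuousLinearMap.map_tsum Dc hsum
  have h1 : (∑' n, Dc (u n)) = -(∑' n, u (n + 1)) := by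
    rw [← tsum_neg]
    exact tsum_congr fun n => by rw [husucc n, neg_neg]
  have h2 : (∑' n, u (n + 1)) = (∑' n, u n) - b := by
    have h := Summable.tsum_eq_zero_add hsum
    rw [hu0] at h
    rw [h]
    abel
  have hσx : substFun hB c (∑' n, u n) = (∑' n, u n) + Dc (∑' n, u n) := by
    rw [hDcx, hDx]
    ring
  rw [hσx, hDa, h1, h2]
  abel

end Subst2

end TateAux

open TateAux

theorem distinguished_surjection_of_small_perturbation
    (k : Type u) [NormedField k] [CompleteSpace k] [IsUltrametricDist k]
    (A : Type v) [NormedCommRing A] [NormedAlgebra k A]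
      [CompleteSpace A] [IsUltrametricDist A]
    (hAff : IsAffinoidAlgebra k A)
    {m : ℕ} (ρ : Fin m → ℝ) (hρ : ∀ i, 0 < ρ i)
    (B : Type u) [NormedCommRing B] [NormedAlgebra k B]
    (hB : IsTateAlgebra k ρ B)
    (ψ : B →ₐ[k] A)
    (hdist : IsDistinguishedSurj ψ.toRingHom)
    (hvals : ∀ i, spNorm (ψ (hB.T i)) = ρ i)
    (g : Fin m → A)
    (hclose : ∀ i, spNorm (ψ (hB.T i) - g i) < ρ i) :
    (∃ ψ' : B →ₐ[k] A, IsBoundedHom ψ'.toRingHom ∧ ∀ i, ψ' (hB.T i) = g i) ∧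
    ∀ ψ' : B →ₐ[k] A, IsBoundedHom ψ'.toRingHom → (∀ i, ψ' (hB.T i) = g i) →
      IsDistinguishedSurj ψ'.toRingHom := by
  classical
  obtain ⟨hbnd, hsurj, hbest⟩ := hdist
  haveI := TateAux.ultra hρ hB
  -- choose preimages of `ψ(T i) - g i` realizing the spectral seminorm
  choose h hh1 hh2 using fun i => hbest (ψ (hB.T i) - g i)
  have hhlt : ∀ i, ‖h i‖ < ρ i := fun i => by rw [hh2]; exact hclose i
  -- a uniform contraction factor
  obtain ⟨t, ht0, ht1, hts⟩ : ∃ t : ℝ, 0 ≤ t ∧ t < 1 ∧ ∀ i, ‖h i‖ ≤ t * ρ i := by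
    set s : Finset ℝ := insert 0 (Finset.univ.image fun i => ‖h i‖ / ρ i) with hs
    have hne : s.Nonempty := ⟨0, Finset.mem_insert_self _ _⟩
    refine ⟨s.max' hne, Finset.le_max' s 0 (Finset.mem_insert_self _ _), ?_, ?_⟩
    · rw [Finset.max'_lt_iff]
      intro x hx
      rw [hs, Finset.mem_insert] at hx
      rcases hx with rfl | hx
      · exact one_pos
      · obtain ⟨i, -, rfl⟩ := Finset.mem_image.mp hx
        rw [div_lt_one (hρ i)]
        exact hhlt i
    · intro i
      have hmem : ‖h i‖ / ρ i ∈ s := by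
        rw [hs, Finset.mem_insert]
        exact Or.inr (Finset.mem_image_of_mem _ (Finset.mem_univ i))
      have := Finset.le_max' s _ hmem
      rwa [div_le_iff₀ (hρ i)] at this
  set c : Fin m → B := fun i => hB.T i - h i with hc_def
  have hcT : ∀ i, ‖c i - hB.T i‖ ≤ t * ρ i := by
    intro i
    have : c i - hB.T i = -(h i) := by rw [hc_def]; ring
    rw [this, norm_neg]
    exact hts i
  have hc : ∀ i, ‖c i‖ ≤ ρ i := by
    intro i
    have h1 : c i = hB.T i + (-(h i)) := by rw [hc_def]; ring
    rw [h1]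
    refine (IsUltrametricDist.norm_add_le_max _ _).trans ?_
    rw [norm_neg, norm_T hρ hB i]
    exact max_le le_rfl (hhlt i).le
  set σ : B →ₐ[k] B := substHom hρ hB hc with hσ_def
  have hσ_app : ∀ a, σ a = substFun hB c a := fun a => rfl
  have hσiso : ∀ a, ‖σ a‖ = ‖a‖ := fun a =>
    norm_substFun_eq hρ hB hc ht0 hcT ht1 a
  have hσsurj : ∀ b0 : B, ∃ b1, σ b1 = b0 := fun b0 =>
    substFun_surjective hρ hB hc ht0 hcT ht1 b0
  have hσT : ∀ i, σ (hB.T i) = c i := fun i => substFun_T hB i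
  -- the composed morphism
  have hψσ_bnd : IsBoundedHom (ψ.comp σ).toRingHom := by
    obtain ⟨C, hC⟩ := hbnd
    refine ⟨C, fun a => ?_⟩
    have : ‖ψ (σ a)‖ ≤ C * ‖σ a‖ := hC (σ a)
    rwa [hσiso a] at this
  have hψσT : ∀ i, (ψ.comp σ) (hB.T i) = g i := by
    intro i
    rw [AlgHom.comp_apply, hσT i, hc_def]
    show ψ (hB.T i - h i) = g i
    rw [map_sub]
    rw [show ψ (h i) = ψ.toRingHom (h i) from rfl, hh1 i]
    ring
  constructor
  · exact ⟨ψ.comp σ, hψσ_bnd, hψσT⟩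
  · intro ψ' hψ'b hψ'T
    have hagree : ∀ a, ψ' a = (ψ.comp σ) a :=
      algHom_eq_of_boundedHom hB ψ' (ψ.comp σ) hψ'b hψσ_bnd
        (fun i => by rw [hψ'T i, hψσT i])
    have hpre : ∀ a : A, ∃ b : B, ψ' b = a ∧ ‖b‖ = spNorm a := by
      intro a
      obtain ⟨b0, hb0, hb0n⟩ := hbest a
      obtain ⟨b1, hb1⟩ := hσsurj b0
      refine ⟨b1, ?_, ?_⟩
      · rw [hagree, AlgHom.comp_apply, hb1]
        exact hb0
      · rw [← hb0n, ← hb1, hσiso b1]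
    refine ⟨hψ'b, fun a => ?_, hpre⟩
    obtain ⟨b, hb, -⟩ := hpre a
    exact ⟨b, hb⟩

end
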